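/- Let p be a prime and R a commutative unital ring. Consider, in the R-module of formal Laurent series over R, the family consisting of the constant series 1 together with all series H_{a_1,a_2,…,a_r}(z) where r ≥ 1 and all a_i are positive integers relatively prime to p. This family is linearly independent over the ring R[z, z^{−1}] of Laurent polynomials: if q_0(z) + Σ_{i=1}^{N} q_i(z) · H_{a_1^{(i)},…,a_{r_i}^{(i)}}(z) = 0 where the q_i(z) ∈ R[z,z^{−1}], the tuples (a_1^{(i)},…,a_{r_i}^{(i)}) are pairwise distinct and all entries a_j^{(i)} are positive integers relatively prime to p, then q_0(z) = q_1(z) = … = q_N(z) = 0. In particular, the family is linearly independent over (ℤ/p^γℤ)[z,z^{−1}] for every positive integer γ and over ℤ[z,z^{−1}]. -/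

import Mathlib

open PowerSeries

/-- `H_{a_1,…,a_r}(z) = Σ_{n_1 > n_2 > … > n_r ≥ 0} z^{a_1 p^{n_1} + … + a_r p^{n_r}}`
as a formal power series over `ℤ`. -/
noncomputable def Hser (p : ℕ) {r : ℕ} (a : Fin r → ℕ) : PowerSeries ℤ :=
  PowerSeries.mk fun m =>
    ((Set.ncard {n : Fin r → ℕ | StrictAnti n ∧ ∑ i, a i * p ^ n i = m} : ℕ) : ℤ)

/-- The series `H_{a_1,…,a_r}(z)`, viewed as a formal Laurent series over a
commutative ring `R` (via the natural map `ℤ → R` on coefficients). -/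
noncomputable def HserR (p : ℕ) (R : Type*) [CommRing R] {r : ℕ} (a : Fin r → ℕ) :
    LaurentSeries R :=
  HahnSeries.ofPowerSeries ℤ R (PowerSeries.map (Int.castRingHom R) (Hser p a))

set_option maxHeartbeats 1000000


/-- Antitonicity from local decrease. -/
lemma anti_aux {s : ℕ} {m : ℕ → ℕ} (hm : ∀ k, k + 1 < s → m (k + 1) < m k) :
    ∀ {i j : ℕ}, i < j → j < s → m j < m i := by
  intro i j
  induction j with
  | zero => omega
  | succ j ih =>
    intro hij hjs
    rcases Nat.lt_succ_iff_lt_or_eq.mp hij with h | h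
    · exact lt_trans (hm j hjs) (ih h (by omega))
    · simpa [h] using hm j hjs

lemma two_pow_le_pow {p : ℕ} (hp : 2 ≤ p) (n : ℕ) : n + 1 ≤ p ^ n :=
  le_trans (Nat.lt_two_pow_self (n := n)) (Nat.pow_le_pow_left hp n)

lemma int_eq_zero_of_dvd_of_lt {d D : ℤ} (hdvd : d ∣ D) (h : |D| < d) : D = 0 := by
  rcases hdvd with ⟨k, rfl⟩
  by_contra hk
  have hk' : k ≠ 0 := by rintro rfl; simp at hk
  have h1 : (1:ℤ) ≤ |k| := Int.one_le_abs (by exact_mod_cast hk')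
  have hd : 0 < d := lt_of_le_of_lt (abs_nonneg _) h
  have : d ≤ |d * k| := by
    rw [abs_mul]
    calc d = d * 1 := by ring
    _ ≤ |d| * |k| := by
        have := abs_of_pos hd
        nlinarith
  omega

/-- Key rigidity lemma: representations of well-gapped targets are unique. -/
lemma keyL (p B M : ℕ) (hp : 2 ≤ p) :
    ∀ r s : ℕ, s ≤ r → ∀ (a n b m : ℕ → ℕ) (c : ℤ) (G Γ : ℕ),
    (r + 2) * B + M + 1 ≤ p ^ G →
    (r + 3) * (G + 3) + G + 4 ≤ Γ →
    (∀ j, j < r → 1 ≤ a j ∧ a j ≤ B ∧ ¬ p ∣ a j) →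
    (∀ k, k < s → 1 ≤ b k ∧ b k ≤ B ∧ ¬ p ∣ b k) →
    c.natAbs ≤ M →
    (∀ j, j + 1 < r → n (j + 1) + Γ ≤ n j) →
    (∀ j, j < r → Γ ≤ n j) →
    (∀ k, k + 1 < s → m (k + 1) < m k) →
    ((∑ k ∈ Finset.range s, (b k : ℤ) * (p : ℤ) ^ m k)
      = (∑ j ∈ Finset.range r, (a j : ℤ) * (p : ℤ) ^ n j) + c) →
    s = r ∧ c = 0 ∧ ∀ k, k < r → b k = a k ∧ m k = n k := by
  intro r
  induction r with
  | zero =>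
    intro s hs a n b m c G Γ hG hΓ ha hb hc hgap hlast hm heq
    obtain rfl : s = 0 := Nat.le_zero.mp hs
    simp only [Finset.range_zero, Finset.sum_empty] at heq
    exact ⟨rfl, by omega, fun k hk => absurd hk (by omega)⟩

  | succ r IH =>
    intro s hs a n b m c G Γ hG0 hΓ0 ha hb hc hgap hlast hm heq
    have hG : (r + 3) * B + M + 1 ≤ p ^ G := by
      have h3 : r + 1 + 2 = r + 3 := by omega
      rwa [h3] at hG0
    have hΓ : (r + 4) * (G + 3) + G + 4 ≤ Γ := by
      have h3 : r + 1 + 3 = r + 4 := by omega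
      rwa [h3] at hΓ0
    have hp1 : (1:ℤ) < (p:ℤ) := by exact_mod_cast hp
    have hppos : (0:ℤ) < (p:ℤ) := by linarith
    have hzp : ∀ e : ℕ, (0:ℤ) < (p:ℤ) ^ e := fun e => pow_pos hppos e
    have hB1 : 1 ≤ B := le_trans (ha 0 (by omega)).1 (ha 0 (by omega)).2.1
    have hΓ1 : 1 ≤ Γ := by omega
    have hnanti : ∀ {i j : ℕ}, i < j → j < r + 1 → n j < n i :=
      fun {i j} h1 h2 => anti_aux (fun j hj => by have := hgap j hj; omega) h1 h2
    set ν : ℕ := if r = 0 then 0 else n 1 with hν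
    have hν_top : ν + Γ ≤ n 0 := by
      by_cases h0 : r = 0
      · have := hlast 0 (by omega); simp [hν, h0]; omega
      · have hg := hgap 0 (by omega)
        norm_num at hg
        simp only [hν, if_neg h0]
        omega
    have hνj : ∀ j, j < r → n (j + 1) ≤ ν := by
      intro j hj
      have h0 : r ≠ 0 := by omega
      simp only [hν, if_neg h0]
      rcases Nat.lt_or_ge 1 (j + 1) with h | h
      · exact le_of_lt (hnanti h (by omega))
      · have : j = 0 := by omega
        simp [this]
    set E : ℤ := (∑ j ∈ Finset.range r, (a (j+1) : ℤ) * (p:ℤ) ^ n (j+1)) + c with hE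
    have heq' : (∑ k ∈ Finset.range s, (b k : ℤ) * (p:ℤ) ^ m k)
        = (a 0 : ℤ) * (p:ℤ) ^ n 0 + E := by
      rw [heq, Finset.sum_range_succ' (fun j => (a j : ℤ) * (p:ℤ) ^ n j) r]
      ring
    have hMle : (M : ℤ) ≤ (p:ℤ) ^ G := by
      exact_mod_cast (by omega : M ≤ p ^ G)
    have hEabs : |E| ≤ (p:ℤ) ^ (ν + G) := by
      have hterm : ∀ j ∈ Finset.range r, (a (j+1) : ℤ) * (p:ℤ) ^ n (j+1) ≤ (B:ℤ) * (p:ℤ) ^ ν := by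
        intro j hj
        rw [Finset.mem_range] at hj
        have h1 : (a (j+1) : ℤ) ≤ (B:ℤ) := by exact_mod_cast (ha (j+1) (by omega)).2.1
        have h2 : (p:ℤ) ^ n (j+1) ≤ (p:ℤ) ^ ν :=
          pow_le_pow_right₀ (by linarith) (hνj j hj)
        exact mul_le_mul h1 h2 (le_of_lt (hzp _)) (by positivity)
      have hsum_le : (∑ j ∈ Finset.range r, (a (j+1) : ℤ) * (p:ℤ) ^ n (j+1))
          ≤ (r : ℤ) * ((B:ℤ) * (p:ℤ) ^ ν) := by
        calc (∑ j ∈ Finset.range r, (a (j+1) : ℤ) * (p:ℤ) ^ n (j+1))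
            ≤ ∑ _j ∈ Finset.range r, (B:ℤ) * (p:ℤ) ^ ν := Finset.sum_le_sum hterm
        _ = (r : ℤ) * ((B:ℤ) * (p:ℤ) ^ ν) := by
            rw [Finset.sum_const, Finset.card_range, nsmul_eq_mul]
      have hsum_nonneg : 0 ≤ (∑ j ∈ Finset.range r, (a (j+1) : ℤ) * (p:ℤ) ^ n (j+1)) :=
        Finset.sum_nonneg fun j _ => mul_nonneg (by positivity) (le_of_lt (hzp _))
      have hcabs : |c| ≤ (M : ℤ) := by
        rw [Int.abs_eq_natAbs]; exact_mod_cast hc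
      have hrBM : ((r * B + M : ℕ) : ℤ) ≤ (p:ℤ) ^ G := by
        have h1 : r * B + M ≤ p ^ G := by
          have : r * B ≤ (r+3) * B := Nat.mul_le_mul_right B (by omega)
          omega
        exact_mod_cast h1
      have hpν : (1:ℤ) ≤ (p:ℤ) ^ ν := by have := hzp ν; omega
      have habs1 : |E| ≤ (r : ℤ) * ((B:ℤ) * (p:ℤ) ^ ν) + (M : ℤ) := by
        rw [hE]
        have habs_sum : |(∑ j ∈ Finset.range r, (a (j+1) : ℤ) * (p:ℤ) ^ n (j+1))|
            = (∑ j ∈ Finset.range r, (a (j+1) : ℤ) * (p:ℤ) ^ n (j+1)) := abs_of_nonneg hsum_nonneg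
        calc |(∑ j ∈ Finset.range r, (a (j+1) : ℤ) * (p:ℤ) ^ n (j+1)) + c|
            ≤ |(∑ j ∈ Finset.range r, (a (j+1) : ℤ) * (p:ℤ) ^ n (j+1))| + |c| := abs_add_le _ _
        _ ≤ (r : ℤ) * ((B:ℤ) * (p:ℤ) ^ ν) + (M : ℤ) := by
            rw [habs_sum]; exact add_le_add hsum_le hcabs
      have h3 : (M:ℤ) * 1 ≤ (M:ℤ) * (p:ℤ) ^ ν :=
        mul_le_mul_of_nonneg_left hpν (by positivity)
      have h2 : ((r:ℤ) * B + M) * (p:ℤ) ^ ν ≤ (p:ℤ) ^ G * (p:ℤ) ^ ν := by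
        apply mul_le_mul_of_nonneg_right _ (le_of_lt (hzp ν))
        exact_mod_cast hrBM
      calc |E| ≤ (r : ℤ) * ((B:ℤ) * (p:ℤ) ^ ν) + (M : ℤ) := habs1
      _ ≤ ((r:ℤ) * B + M) * (p:ℤ) ^ ν := by ring_nf; ring_nf at h3; linarith only [h3]
      _ ≤ (p:ℤ) ^ G * (p:ℤ) ^ ν := h2
      _ = (p:ℤ) ^ (ν + G) := by rw [← pow_add]; ring_nf
    -- pigeonhole for the cutoff L₀
    set L : ℕ → ℕ := fun i => ν + G + 4 + i * (G + 3) with hLdef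
    have hdisj : ∀ i i' k, i < i' → (L i < m k + (G+3) ∧ m k < L i) →
        (L i' < m k + (G+3) ∧ m k < L i') → False := by
      intro i i' k hii' h1 h2
      have : (i+1) * (G+3) ≤ i' * (G+3) := Nat.mul_le_mul_right _ (by omega)
      simp only [hLdef] at h1 h2
      nlinarith
    classical
    set f : ℕ → ℕ := fun k =>
      if h : ∃ i, i < s + 1 ∧ (L i < m k + (G+3) ∧ m k < L i) then h.choose else s + 1
      with hfdef
    have hBadsub : (Finset.range (s+1)).filter
        (fun i => ∃ k, k < s ∧ (L i < m k + (G+3) ∧ m k < L i))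
        ⊆ (Finset.range s).image f := by
      intro i hi
      rw [Finset.mem_filter, Finset.mem_range] at hi
      obtain ⟨his, k, hks, hz⟩ := hi
      rw [Finset.mem_image]
      refine ⟨k, Finset.mem_range.mpr hks, ?_⟩
      have hex : ∃ i, i < s + 1 ∧ (L i < m k + (G+3) ∧ m k < L i) := ⟨i, his, hz⟩
      rw [hfdef]; simp only [dif_pos hex]
      obtain ⟨hc1, hc2⟩ := hex.choose_spec
      rcases lt_trichotomy hex.choose i with h | h | h
      · exact absurd (hdisj _ _ k h hc2 hz) (fun x => x)
      · exact h
      · exact absurd (hdisj _ _ k h hz hc2) (fun x => x)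
    have hex_i₀ : ∃ i₀, i₀ < s + 1 ∧ ∀ k, k < s → ¬ (L i₀ < m k + (G+3) ∧ m k < L i₀) := by
      by_contra hcon
      push_neg at hcon
      have hsub : Finset.range (s+1) ⊆ (Finset.range (s+1)).filter
          (fun i => ∃ k, k < s ∧ (L i < m k + (G+3) ∧ m k < L i)) := by
        intro i hi
        rw [Finset.mem_range] at hi
        obtain ⟨k, hk1, hk2, hk3⟩ := hcon i hi
        exact Finset.mem_filter.mpr ⟨Finset.mem_range.mpr hi, k, hk1, hk2, hk3⟩
      have h1 := Finset.card_le_card (hsub.trans hBadsub)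
      have h2 := Finset.card_image_le (s := Finset.range s) (f := f)
      rw [Finset.card_range] at h1
      rw [Finset.card_range] at h2
      omega
    obtain ⟨i₀, hi₀s, hfree⟩ := hex_i₀
    set L₀ : ℕ := L i₀ with hL₀def
    have hrflL : L₀ = ν + G + 4 + i₀ * (G + 3) := by rw [hL₀def]
    have hL₀low : ν + G + 4 ≤ L₀ := by omega
    have hL₀top : L₀ ≤ n 0 := by
      have h1 : i₀ * (G+3) ≤ (r+1) * (G+3) := Nat.mul_le_mul_right _ (by omega)
      have h2 : (r+1) * (G+3) ≤ (r+4) * (G+3) := Nat.mul_le_mul_right _ (by omega)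
      omega
    -- the split point t
    have hPex : ∃ k, k = s ∨ m k < L₀ := ⟨s, Or.inl rfl⟩
    set t : ℕ := Nat.find hPex with htdef
    have ht_le : t ≤ s := Nat.find_le (Or.inl rfl)
    have ht_spec : t = s ∨ m t < L₀ := Nat.find_spec hPex
    have ht_high : ∀ k, k < t → L₀ ≤ m k ∧ k < s := by
      intro k hk
      have := Nat.find_min hPex hk
      push_neg at this
      exact ⟨by omega, by omega⟩
    set Hi : ℤ := ∑ k ∈ Finset.range t, (b k : ℤ) * (p:ℤ) ^ m k with hHidef
    set W : ℤ := ∑ k ∈ Finset.Ico t s, (b k : ℤ) * (p:ℤ) ^ m k with hWdef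
    have hsplit : Hi + W = (a 0 : ℤ) * (p:ℤ) ^ n 0 + E := by
      rw [hHidef, hWdef, ← heq', Finset.range_eq_Ico,
        Finset.sum_Ico_consecutive _ (Nat.zero_le t) ht_le, ← Finset.range_eq_Ico]
    set D : ℤ := E - W with hDdef
    have hHiD : Hi = (a 0 : ℤ) * (p:ℤ) ^ n 0 + D := by rw [hDdef]; linarith
    have hW_nonneg : 0 ≤ W :=
      Finset.sum_nonneg fun k _ => mul_nonneg (by positivity) (le_of_lt (hzp _))
    have hW8 : 8 * W ≤ (p:ℤ) ^ L₀ := by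
      rcases eq_or_lt_of_le ht_le with hts | hts
      · have : W = 0 := by rw [hWdef, hts]; simp
        rw [this]; have := hzp L₀; linarith
      · have hmt : m t < L₀ := by rcases ht_spec with h | h; omega; exact h
        have hmt3 : m t + (G + 3) ≤ L₀ := by
          have := hfree t hts
          omega
        have hterm : ∀ k ∈ Finset.Ico t s, (b k : ℤ) * (p:ℤ) ^ m k ≤ (B:ℤ) * (p:ℤ) ^ m t := by
          intro k hk
          rw [Finset.mem_Ico] at hk
          have h1 : (b k : ℤ) ≤ (B:ℤ) := by exact_mod_cast (hb k hk.2).2.1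
          have h2 : m k ≤ m t := by
            rcases eq_or_lt_of_le hk.1 with h | h
            · rw [← h]
            · exact le_of_lt (anti_aux hm h hk.2)
          have h3 : (p:ℤ) ^ m k ≤ (p:ℤ) ^ m t := pow_le_pow_right₀ (by linarith) h2
          exact mul_le_mul h1 h3 (le_of_lt (hzp _)) (by positivity)
        have hWle : W ≤ (s : ℤ) * ((B:ℤ) * (p:ℤ) ^ m t) := by
          calc W ≤ ∑ _k ∈ Finset.Ico t s, (B:ℤ) * (p:ℤ) ^ m t := Finset.sum_le_sum hterm
          _ = ((s - t : ℕ) : ℤ) * ((B:ℤ) * (p:ℤ) ^ m t) := by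
              rw [Finset.sum_const, Nat.card_Ico, nsmul_eq_mul]
          _ ≤ (s : ℤ) * ((B:ℤ) * (p:ℤ) ^ m t) := by
              have h1 : ((s - t : ℕ) : ℤ) ≤ (s : ℤ) := by
                have : s - t ≤ s := Nat.sub_le s t
                exact_mod_cast this
              have h2 : (0:ℤ) ≤ (B:ℤ) * (p:ℤ) ^ m t :=
                mul_nonneg (by positivity) (le_of_lt (hzp _))
              exact mul_le_mul_of_nonneg_right h1 h2
        have hsB : ((s * B : ℕ) : ℤ) ≤ (p:ℤ) ^ G := by
          have h1 : s * B ≤ (r+3) * B := Nat.mul_le_mul_right B (by omega)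
          have h2 : s * B ≤ p ^ G := by omega
          exact_mod_cast h2
        have hWpG : W ≤ (p:ℤ) ^ (G + m t) := by
          have h4 : (s:ℤ) * ((B:ℤ) * (p:ℤ) ^ m t) ≤ (p:ℤ) ^ G * (p:ℤ) ^ m t := by
            rw [← mul_assoc]
            apply mul_le_mul_of_nonneg_right _ (le_of_lt (hzp (m t)))
            exact_mod_cast hsB
          calc W ≤ (s:ℤ) * ((B:ℤ) * (p:ℤ) ^ m t) := hWle
          _ ≤ (p:ℤ) ^ G * (p:ℤ) ^ m t := h4
          _ = (p:ℤ) ^ (G + m t) := by rw [← pow_add]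
        have hp3 : (p:ℤ) ^ (G + m t) * 8 ≤ (p:ℤ) ^ L₀ := by
          have h8 : (8:ℤ) ≤ (p:ℤ) ^ 3 := by
            have : (2:ℤ) ^ 3 ≤ (p:ℤ) ^ 3 := pow_le_pow_left₀ (by norm_num) (by exact_mod_cast hp) 3
            norm_num at this ⊢; linarith
          calc (p:ℤ) ^ (G + m t) * 8 ≤ (p:ℤ) ^ (G + m t) * (p:ℤ) ^ 3 :=
                mul_le_mul_of_nonneg_left h8 (le_of_lt (hzp _))
          _ = (p:ℤ) ^ (G + m t + 3) := by rw [← pow_add]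
          _ ≤ (p:ℤ) ^ L₀ := pow_le_pow_right₀ (by linarith) (by omega)
        linarith only [hWpG, hp3]
    have hE16 : 16 * |E| ≤ (p:ℤ) ^ L₀ := by
      have hp4 : (p:ℤ) ^ (ν + G) * 16 ≤ (p:ℤ) ^ L₀ := by
        have h16 : (16:ℤ) ≤ (p:ℤ) ^ 4 := by
          have : (2:ℤ) ^ 4 ≤ (p:ℤ) ^ 4 := pow_le_pow_left₀ (by norm_num) (by exact_mod_cast hp) 4
          norm_num at this ⊢; linarith
        calc (p:ℤ) ^ (ν + G) * 16 ≤ (p:ℤ) ^ (ν + G) * (p:ℤ) ^ 4 :=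
              mul_le_mul_of_nonneg_left h16 (le_of_lt (hzp _))
        _ = (p:ℤ) ^ (ν + G + 4) := by rw [← pow_add]
        _ ≤ (p:ℤ) ^ L₀ := pow_le_pow_right₀ (by linarith) (by omega)
      linarith only [hEabs, hp4]
    have hDabs : |D| < (p:ℤ) ^ L₀ := by
      have h1 : |D| ≤ |E| + W := by
        rw [hDdef]
        calc |E - W| ≤ |E| + |W| := abs_sub _ _
        _ = |E| + W := by rw [abs_of_nonneg hW_nonneg]
      linarith only [h1, hE16, hW8, hW_nonneg, abs_nonneg E, hzp L₀]
    have hdvdHi : (p:ℤ) ^ L₀ ∣ Hi := by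
      rw [hHidef]
      apply Finset.dvd_sum
      intro k hk
      rw [Finset.mem_range] at hk
      have := (ht_high k hk).1
      exact Dvd.dvd.mul_left (pow_dvd_pow _ this) _
    have hdvdD : (p:ℤ) ^ L₀ ∣ D := by
      have h1 : D = Hi - (a 0 : ℤ) * (p:ℤ) ^ n 0 := by linarith
      rw [h1]
      exact dvd_sub hdvdHi (Dvd.dvd.mul_left (pow_dvd_pow _ hL₀top) _)
    have hD0 : D = 0 := int_eq_zero_of_dvd_of_lt hdvdD hDabs
    have hHi0 : Hi = (a 0 : ℤ) * (p:ℤ) ^ n 0 := by rw [hHiD, hD0]; ring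
    -- t ≥ 1
    have ht1 : 1 ≤ t := by
      by_contra hcon
      have ht0 : t = 0 := by omega
      have : Hi = 0 := by rw [hHidef, ht0]; simp
      rw [this] at hHi0
      have h1 : (1:ℤ) ≤ (a 0 : ℤ) := by exact_mod_cast (ha 0 (by omega)).1
      have h3 : 0 < (a 0 : ℤ) * (p:ℤ) ^ n 0 :=
        mul_pos (by linarith) (hzp (n 0))
      linarith only [h3, hHi0]
    set τ : ℕ := t - 1 with hτdef
    have htτ : t = τ + 1 := by omega
    have hτs : τ < s := by omega
    have hmτ_le : ∀ k, k < t → m τ ≤ m k := by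
      intro k hk
      rcases eq_or_lt_of_le (by omega : k ≤ τ) with h | h
      · rw [h]
      · exact le_of_lt (anti_aux hm h hτs)
    set U : ℤ := ∑ k ∈ Finset.range t, (b k : ℤ) * (p:ℤ) ^ (m k - m τ) with hUdef
    have hfac : Hi = (p:ℤ) ^ (m τ) * U := by
      rw [hHidef, hUdef, Finset.mul_sum]
      apply Finset.sum_congr rfl
      intro k hk
      rw [Finset.mem_range] at hk
      have h1 : m τ + (m k - m τ) = m k := by have := hmτ_le k hk; omega
      have h2 : (p:ℤ) ^ m k = (p:ℤ) ^ m τ * (p:ℤ) ^ (m k - m τ) := by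
        conv_lhs => rw [← h1]
        rw [pow_add]
      rw [h2]; ring
    have hpU : ¬ (p:ℤ) ∣ U := by
      intro hdvd
      have hUsplit : U = (∑ k ∈ Finset.range τ, (b k : ℤ) * (p:ℤ) ^ (m k - m τ)) + (b τ : ℤ) := by
        rw [hUdef, htτ, Finset.sum_range_succ, Nat.sub_self, pow_zero, mul_one]
      have hdvd_sum : (p:ℤ) ∣ (∑ k ∈ Finset.range τ, (b k : ℤ) * (p:ℤ) ^ (m k - m τ)) := by
        apply Finset.dvd_sum
        intro k hk
        rw [Finset.mem_range] at hk
        have h1 : 1 ≤ m k - m τ := by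
          have := anti_aux hm hk hτs
          omega
        exact Dvd.dvd.mul_left (dvd_pow (dvd_refl _) (by omega)) _
      have hbτ : (p:ℤ) ∣ (b τ : ℤ) := by
        have : (b τ : ℤ) = U - (∑ k ∈ Finset.range τ, (b k : ℤ) * (p:ℤ) ^ (m k - m τ)) := by
          rw [hUsplit]; ring
        rw [this]
        exact dvd_sub hdvd hdvd_sum
      have : (p : ℕ) ∣ b τ := by exact_mod_cast hbτ
      exact (hb τ hτs).2.2 this
    have hpa0 : ¬ (p:ℤ) ∣ (a 0 : ℤ) := by
      intro hdvd
      exact (ha 0 (by omega)).2.2 (by exact_mod_cast hdvd)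
    have hkey : m τ = n 0 ∧ U = (a 0 : ℤ) := by
      have heqU : (p:ℤ) ^ (m τ) * U = (a 0 : ℤ) * (p:ℤ) ^ n 0 := by rw [← hfac, hHi0]
      rcases Nat.lt_trichotomy (m τ) (n 0) with h | h | h
      · exfalso
        have h1 : (p:ℤ) ^ (m τ) * U = (p:ℤ) ^ (m τ) * ((a 0 : ℤ) * (p:ℤ) ^ (n 0 - m τ)) := by
          rw [heqU]
          have h0 : n 0 = m τ + (n 0 - m τ) := by omega
          conv_lhs => rw [h0]
          rw [pow_add]; ring
        have h2 : U = (a 0 : ℤ) * (p:ℤ) ^ (n 0 - m τ) :=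
          mul_left_cancel₀ (by positivity) h1
        apply hpU
        rw [h2]
        exact Dvd.dvd.mul_left (dvd_pow (dvd_refl _) (by omega)) _
      · constructor
        · exact h
        · rw [h] at heqU
          exact mul_left_cancel₀ (a := (p:ℤ) ^ n 0) (by positivity) (by linarith [heqU])
      · exfalso
        have h1 : (p:ℤ) ^ (n 0) * ((p:ℤ) ^ (m τ - n 0) * U) = (p:ℤ) ^ (n 0) * (a 0 : ℤ) := by
          rw [← mul_assoc, ← pow_add]
          have h0 : n 0 + (m τ - n 0) = m τ := by omega
          rw [h0]; linarith [heqU]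
        have h2 : (p:ℤ) ^ (m τ - n 0) * U = (a 0 : ℤ) :=
          mul_left_cancel₀ (by positivity) h1
        apply hpa0
        rw [← h2]
        exact Dvd.dvd.mul_right (dvd_pow (dvd_refl _) (by omega)) _
    -- tail
    have htail : (∑ k ∈ Finset.range (s - t), (b (t + k) : ℤ) * (p:ℤ) ^ m (t + k))
        = (∑ j ∈ Finset.range r, (a (j+1) : ℤ) * (p:ℤ) ^ n (j+1)) + c := by
      have hWE : W = E := by rw [hDdef] at hD0; linarith
      rw [← Finset.sum_Ico_eq_sum_range (fun k => (b k : ℤ) * (p:ℤ) ^ m k) t s]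
      rw [← hWdef, hWE, hE]
    have hIH := IH (s - t) (by omega) (fun j => a (j+1)) (fun j => n (j+1))
      (fun k => b (t + k)) (fun k => m (t + k)) c G Γ
      (by
        have : (r+2) * B ≤ (r+3) * B := Nat.mul_le_mul_right B (by omega)
        omega)
      (by
        have : (r+3) * (G+3) ≤ (r+4) * (G+3) := Nat.mul_le_mul_right _ (by omega)
        omega)
      (fun j hj => ha (j+1) (by omega))
      (fun k hk => hb (t+k) (by omega))
      hc
      (fun j hj => hgap (j+1) (by omega))
      (fun j hj => hlast (j+1) (by omega))
      (fun k hk => by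
        have h1 : t + (k + 1) = (t + k) + 1 := by omega
        have := hm (t + k) (by omega)
        simpa [h1] using this)
      htail
    obtain ⟨hst, hc0, hrest⟩ := hIH
    have ht_eq : t = 1 := by omega
    have hs_eq : s = r + 1 := by omega
    have hτ0 : τ = 0 := by omega
    have hU0 : U = (b 0 : ℤ) := by
      rw [hUdef, ht_eq, hτ0]
      simp
    have hb0 : b 0 = a 0 := by
      have := hkey.2
      rw [hU0] at this
      exact_mod_cast this
    have hm0 : m 0 = n 0 := by
      have h := hkey.1
      rw [hτ0] at h
      exact h
    refine ⟨hs_eq, hc0, ?_⟩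
    intro k hk
    cases k with
    | zero => exact ⟨hb0, hm0⟩
    | succ k =>
      have hk' : k < r := by omega
      have h := hrest k hk'
      simp only [ht_eq, Nat.add_comm 1 k] at h
      exact h

lemma HserR_coeff (p : ℕ) (R : Type*) [CommRing R] {r : ℕ} (a : Fin r → ℕ) (v : ℤ)
    (hv : 0 ≤ v) :
    (HserR p R a).coeff v =
      ((Set.ncard {x : Fin r → ℕ | StrictAnti x ∧ ∑ i, a i * p ^ x i = v.toNat} : ℤ) : R) := by
  have h1 : v = ((v.toNat : ℕ) : ℤ) := (Int.toNat_of_nonneg hv).symm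
  conv_lhs => rw [h1]
  rw [HserR, HahnSeries.ofPowerSeries_apply_coeff, PowerSeries.coeff_map, Hser,
    PowerSeries.coeff_mk]
  simp

/-- coefficient at a point, as an additive monoid hom -/
def coeffHom (Γ : Type*) (R : Type*) [PartialOrder Γ] [AddCommMonoid R] (g : Γ) :
    HahnSeries Γ R →+ R where
  toFun x := x.coeff g
  map_zero' := rfl
  map_add' _ _ := rfl

/-- Linear independence, over the Laurent polynomials `R[z,z⁻¹]` (here represented as
Laurent series with finite support), of the family consisting of `1` together with the
series `H_{a_1,…,a_r}(z)` whose parameters are all relatively prime to `p`: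
if `q_0 + Σ_i q_i · H_{a^{(i)}}(z) = 0` with pairwise distinct tuples `a^{(i)}`,
then all the `q_i` vanish. -/
theorem stmt_6 (p : ℕ) (hp : p.Prime) (R : Type*) [CommRing R]
    (N : ℕ) (r : Fin N → ℕ) (hr : ∀ i, 0 < r i)
    (a : (i : Fin N) → Fin (r i) → ℕ)
    (hpos : ∀ i j, 0 < a i j) (hcop : ∀ i j, Nat.Coprime (a i j) p)
    (hdist : ∀ i j, i ≠ j →
      (⟨r i, a i⟩ : Σ n : ℕ, Fin n → ℕ) ≠ ⟨r j, a j⟩)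
    (q₀ : LaurentSeries R) (hq₀ : q₀.support.Finite)
    (q : Fin N → LaurentSeries R) (hq : ∀ i, (q i).support.Finite)
    (heq : q₀ + ∑ i, q i * HserR p R (a i) = 0) :
    q₀ = 0 ∧ ∀ i, q i = 0 := by
  classical
  rcases subsingleton_or_nontrivial R with hR | hR
  · exact ⟨Subsingleton.elim _ _, fun i => Subsingleton.elim _ _⟩
  have hp2 : 2 ≤ p := hp.two_le
  have hndvd : ∀ i j, ¬ p ∣ a i j := by
    intro i j hdvd
    have h1 : p ∣ Nat.gcd (a i j) p := Nat.dvd_gcd hdvd dvd_rfl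
    rw [(hcop i j)] at h1
    have := Nat.le_of_dvd one_pos h1
    omega
  set S : Finset ℤ := hq₀.toFinset ∪ Finset.univ.biUnion (fun i => (hq i).toFinset) with hS
  set M : ℕ := S.sup Int.natAbs with hM
  have hM₀ : ∀ x : ℤ, (M:ℤ) < |x| → q₀.coeff x = 0 := by
    intro x hx
    by_contra hne
    have hxS : x ∈ S := by
      rw [hS]
      apply Finset.mem_union_left
      rw [Set.Finite.mem_toFinset]
      exact hne
    have h2 := Finset.le_sup (f := Int.natAbs) hxS
    rw [← hM] at h2
    rw [Int.abs_eq_natAbs] at hx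
    exact absurd hx (by exact_mod_cast not_lt.mpr h2)
  have hMq : ∀ (i : Fin N) (x : ℤ), (M:ℤ) < |x| → (q i).coeff x = 0 := by
    intro i x hx
    by_contra hne
    have hxS : x ∈ S := by
      rw [hS]
      apply Finset.mem_union_right
      exact Finset.mem_biUnion.mpr ⟨i, Finset.mem_univ i, (Set.Finite.mem_toFinset _).mpr hne⟩
    have h2 := Finset.le_sup (f := Int.natAbs) hxS
    rw [← hM] at h2
    rw [Int.abs_eq_natAbs] at hx
    exact absurd hx (by exact_mod_cast not_lt.mpr h2)
  set B : ℕ := Finset.univ.sup (fun i : Fin N => Finset.univ.sup (fun j => a i j)) with hB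
  have hBab : ∀ (i : Fin N) (j : Fin (r i)), a i j ≤ B := by
    intro i j
    calc a i j ≤ Finset.univ.sup (fun j => a i j) := Finset.le_sup (Finset.mem_univ j)
    _ ≤ B := by
        rw [hB]
        exact Finset.le_sup (f := fun i => Finset.univ.sup (fun j => a i j)) (Finset.mem_univ i)
  have key : ∀ i₀ : Fin N, (∀ i, r i₀ < r i → q i = 0) → q i₀ = 0 := by
    intro i₀ hlong
    ext e
    rw [HahnSeries.coeff_zero]
    have hρ1 : 1 ≤ r i₀ := hr i₀
    set ρ : ℕ := r i₀ with hρ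
    set M' : ℕ := M + e.natAbs with hM'
    set G : ℕ := (ρ + 2) * B + M' + 1 with hGdef
    set Γ : ℕ := (ρ + 3) * (G + 3) + G + 4 + (M' + 1) with hΓdef
    have hΓ1 : 1 ≤ Γ := by omega
    have hGcond : (ρ + 2) * B + M' + 1 ≤ p ^ G := by
      have := two_pow_le_pow hp2 G
      omega
    have hΓcond : (ρ + 3) * (G + 3) + G + 4 ≤ Γ := by omega
    have hΓbig : M + e.natAbs + 1 < p ^ Γ := by
      have := two_pow_le_pow hp2 Γ
      omega
    set nn : ℕ → ℕ := fun j => (ρ - j) * Γ with hnn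
    have hnnj : ∀ j, nn j = (ρ - j) * Γ := fun j => rfl
    have hgapn : ∀ j, j + 1 < ρ → nn (j + 1) + Γ ≤ nn j := by
      intro j hj
      rw [hnnj, hnnj]
      have h1 : ρ - j = (ρ - (j+1)) + 1 := by omega
      rw [h1, Nat.succ_mul]
    have hlastn : ∀ j, j < ρ → Γ ≤ nn j := by
      intro j hj
      rw [hnnj]
      have h1 : 1 ≤ ρ - j := by omega
      calc Γ = 1 * Γ := (one_mul Γ).symm
      _ ≤ (ρ - j) * Γ := Nat.mul_le_mul_right Γ h1
    set aN : ℕ → ℕ := fun j => if h : j < ρ then a i₀ ⟨j, h⟩ else 1 with haN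
    have haNval : ∀ j (h : j < ρ), aN j = a i₀ ⟨j, h⟩ := by
      intro j h
      rw [haN]
      simp only [dif_pos h]
    have haNprop : ∀ j, j < ρ → 1 ≤ aN j ∧ aN j ≤ B ∧ ¬ p ∣ aN j := by
      intro j hj
      rw [haNval j hj]
      exact ⟨hpos i₀ _, hBab i₀ _, hndvd i₀ _⟩
    set T : ℤ := (∑ j ∈ Finset.range ρ, (aN j : ℤ) * (p:ℤ) ^ nn j) + e with hT
    have hp1 : (1:ℤ) < (p:ℤ) := by exact_mod_cast hp2
    have hzp : ∀ x : ℕ, (0:ℤ) < (p:ℤ) ^ x := fun x => pow_pos (by linarith) x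
    have hsum_ge : (p:ℤ) ^ Γ ≤ ∑ j ∈ Finset.range ρ, (aN j : ℤ) * (p:ℤ) ^ nn j := by
      have hmem : ρ - 1 ∈ Finset.range ρ := Finset.mem_range.mpr (by omega)
      have h1 : (p:ℤ) ^ Γ ≤ (aN (ρ-1) : ℤ) * (p:ℤ) ^ nn (ρ-1) := by
        have h2 : nn (ρ-1) = Γ := by rw [hnnj]; have : ρ - (ρ-1) = 1 := by omega
                                     rw [this, one_mul]
        rw [h2]
        have h3 : (1:ℤ) ≤ (aN (ρ-1) : ℤ) := by exact_mod_cast (haNprop (ρ-1) (by omega)).1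
        nlinarith [hzp Γ]
      calc (p:ℤ) ^ Γ ≤ (aN (ρ-1) : ℤ) * (p:ℤ) ^ nn (ρ-1) := h1
      _ ≤ ∑ j ∈ Finset.range ρ, (aN j : ℤ) * (p:ℤ) ^ nn j :=
          Finset.single_le_sum (f := fun j => (aN j : ℤ) * (p:ℤ) ^ nn j)
            (fun j _ => mul_nonneg (by positivity) (le_of_lt (hzp _))) hmem
    have hpΓZ : (M:ℤ) + e.natAbs + 1 < (p:ℤ) ^ Γ := by exact_mod_cast hΓbig
    have habs_e : |e| ≤ (e.natAbs : ℤ) := by rw [Int.abs_eq_natAbs]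
    -- uniqueness of representations, via keyL
    have huniq : ∀ (i : Fin N), r i ≤ ρ → ∀ c : ℤ, c.natAbs ≤ M' →
        ∀ x : Fin (r i) → ℕ, StrictAnti x →
        ((∑ k : Fin (r i), a i k * p ^ x k : ℕ) : ℤ)
          = (∑ j ∈ Finset.range ρ, (aN j : ℤ) * (p:ℤ) ^ nn j) + c →
        r i = ρ ∧ c = 0 ∧ ∀ k (h : k < r i), a i ⟨k, h⟩ = aN k ∧ x ⟨k, h⟩ = nn k := by
      intro i hri c hcM x hxa hxs
      set bN : ℕ → ℕ := fun k => if h : k < r i then a i ⟨k, h⟩ else 1 with hbN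
      set mN : ℕ → ℕ := fun k => if h : k < r i then x ⟨k, h⟩ else 0 with hmN
      have hbNval : ∀ k (h : k < r i), bN k = a i ⟨k, h⟩ := by
        intro k h; rw [hbN]; simp only [dif_pos h]
      have hmNval : ∀ k (h : k < r i), mN k = x ⟨k, h⟩ := by
        intro k h; rw [hmN]; simp only [dif_pos h]
      have hbNprop : ∀ k, k < r i → 1 ≤ bN k ∧ bN k ≤ B ∧ ¬ p ∣ bN k := by
        intro k hk
        rw [hbNval k hk]
        exact ⟨hpos i _, hBab i _, hndvd i _⟩
      have hmdec : ∀ k, k + 1 < r i → mN (k+1) < mN k := by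
        intro k hk
        rw [hmNval (k+1) hk, hmNval k (by omega)]
        exact hxa (Fin.mk_lt_mk.mpr (by omega))
      have hZeq : (∑ k ∈ Finset.range (r i), (bN k : ℤ) * (p:ℤ) ^ mN k)
          = (∑ j ∈ Finset.range ρ, (aN j : ℤ) * (p:ℤ) ^ nn j) + c := by
        have hL : (∑ k ∈ Finset.range (r i), (bN k : ℤ) * (p:ℤ) ^ mN k)
            = ((∑ k : Fin (r i), a i k * p ^ x k : ℕ) : ℤ) := by
          rw [← Fin.sum_univ_eq_sum_range (fun k => (bN k : ℤ) * (p:ℤ) ^ mN k) (r i)]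
          push_cast
          apply Finset.sum_congr rfl
          intro k _
          rw [hbNval _ k.isLt, hmNval _ k.isLt]
        rw [hL, hxs]
      obtain ⟨hsr, hc0, hpt⟩ := keyL p B M' hp2 ρ (r i) hri aN nn bN mN c G Γ
        hGcond hΓcond haNprop hbNprop hcM hgapn hlastn hmdec hZeq
      refine ⟨hsr, hc0, ?_⟩
      intro k hk
      have h1 := hpt k (by omega)
      rw [hbNval k (by omega), hmNval k (by omega)] at h1
      exact ⟨h1.1, h1.2⟩
    -- the crucial vanishing of H-coefficients
    have hHzero : ∀ (i : Fin N), r i ≤ ρ → ∀ u v : ℤ, |u| ≤ (M:ℤ) → u + v = T →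
        ¬ (i = i₀ ∧ u = e) → (HserR p R (a i)).coeff v = 0 := by
      intro i hri u v huM huv hnot
      have huMn : (u.natAbs : ℤ) ≤ (M : ℤ) := by rw [← Int.abs_eq_natAbs]; exact huM
      have huMn' : u.natAbs ≤ M := by exact_mod_cast huMn
      have hv0 : 0 ≤ v := by
        have h1 := le_abs_self u
        have h2 := neg_abs_le e
        rw [hT] at huv
        linarith only [hsum_ge, hpΓZ, habs_e, huM, h1, h2, huv]
      rw [HserR_coeff p R (a i) v hv0]
      have hset : {x : Fin (r i) → ℕ | StrictAnti x ∧ ∑ k, a i k * p ^ x k = v.toNat} = ∅ := by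
        rw [Set.eq_empty_iff_forall_notMem]
        rintro x ⟨hxa, hxs⟩
        have hvz : (v.toNat : ℤ) = v := Int.toNat_of_nonneg hv0
        have hxcast : ((∑ k : Fin (r i), a i k * p ^ x k : ℕ) : ℤ)
            = (∑ j ∈ Finset.range ρ, (aN j : ℤ) * (p:ℤ) ^ nn j) + (e - u) := by
          rw [hxs, hvz]
          rw [hT] at huv
          linarith only [huv]
        obtain ⟨hsr, hc0, hpt⟩ := huniq i hri (e - u) (by omega) x hxa hxcast
        by_cases hii : i = i₀
        · refine hnot ⟨hii, ?_⟩
          omega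
        · apply hdist i i₀ hii
          have hri0 : r i = r i₀ := by rw [← hρ, ← hsr]
          refine Sigma.ext hri0 ?_
          rw [Fin.heq_fun_iff hri0]
          intro k
          show a i k = a i₀ (Fin.cast hri0 k)
          have hkρ : (k : ℕ) < ρ := by rw [hρ, ← hri0]; exact k.isLt
          have h1 := (hpt k.val k.isLt).1
          rw [haNval _ hkρ] at h1
          have h2 : a i ⟨(k:ℕ), k.isLt⟩ = a i k := by congr
          rw [h2] at h1
          exact h1
      rw [hset]
      simp
    -- now evaluate the coefficient of the relation at T
    have hTe : T - e = ∑ j ∈ Finset.range ρ, (aN j : ℤ) * (p:ℤ) ^ nn j := by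
      rw [hT]; ring
    have hT0 : (0:ℤ) ≤ T - e := by
      rw [hTe]
      linarith only [hsum_ge, hzp Γ]
    have hHone : (HserR p R (a i₀)).coeff (T - e) = 1 := by
      rw [HserR_coeff p R (a i₀) _ hT0]
      have hset : {x : Fin ρ → ℕ | StrictAnti x ∧ ∑ k, a i₀ k * p ^ x k = (T - e).toNat}
          = {fun j : Fin ρ => nn (j : ℕ)} := by
        have hcast : ((∑ k : Fin ρ, a i₀ k * p ^ nn (k : ℕ) : ℕ) : ℤ) = T - e := by
          rw [hTe, ← Fin.sum_univ_eq_sum_range (fun j => (aN j : ℤ) * (p:ℤ) ^ nn j) ρ]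
          push_cast
          apply Finset.sum_congr rfl
          intro k _
          rw [haNval _ k.isLt]
        apply Set.eq_singleton_iff_unique_mem.mpr
        constructor
        · constructor
          · intro j j' hjj'
            show nn (j' : ℕ) < nn (j : ℕ)
            rw [hnnj, hnnj]
            refine (Nat.mul_lt_mul_right (by omega : 0 < Γ)).mpr ?_
            have h1 := j'.isLt
            have h2 : (j : ℕ) < (j' : ℕ) := hjj'
            omega
          · show (∑ k : Fin ρ, a i₀ k * p ^ nn (k : ℕ)) = (T - e).toNat
            rw [← hcast, Int.toNat_natCast]
        · rintro x ⟨hxa, hxs⟩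
          have hxcast : ((∑ k : Fin ρ, a i₀ k * p ^ x k : ℕ) : ℤ)
              = (∑ j ∈ Finset.range ρ, (aN j : ℤ) * (p:ℤ) ^ nn j) + 0 := by
            rw [hxs, Int.toNat_of_nonneg hT0, add_zero, hTe]
          obtain ⟨_, _, hpt⟩ := huniq i₀ (le_refl ρ) 0 (by simp) x hxa hxcast
          funext j
          have h1 := (hpt j.val j.isLt).2
          have h2 : x ⟨(j:ℕ), j.isLt⟩ = x j := by congr
          rw [h2] at h1
          exact h1
      rw [hset]
      simp
    have hcoeffT : q₀.coeff T + ∑ i, (q i * HserR p R (a i)).coeff T = 0 := by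
      have h1 : (q₀ + ∑ i, q i * HserR p R (a i)).coeff T = 0 := by
        rw [heq, HahnSeries.coeff_zero]
      rw [HahnSeries.coeff_add] at h1
      have h2 : (∑ i, q i * HserR p R (a i)).coeff T = ∑ i, (q i * HserR p R (a i)).coeff T :=
        map_sum (coeffHom ℤ R T) (fun i => q i * HserR p R (a i)) Finset.univ
      rw [h2] at h1
      exact h1
    have hq₀T : q₀.coeff T = 0 := by
      apply hM₀
      have h1 := neg_abs_le e
      have h2 : (M:ℤ) < T := by
        rw [hT]
        linarith only [hsum_ge, hpΓZ, habs_e, h1]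
      have h0 : (0:ℤ) ≤ T := le_trans (Nat.cast_nonneg M) (le_of_lt h2)
      rwa [abs_of_nonneg h0]
    have hsupb : ∀ (i : Fin N) (u : ℤ), u ∈ (q i).support → |u| ≤ (M:ℤ) := by
      intro i u hu
      by_contra hcon
      push_neg at hcon
      exact (Function.mem_support.mp hu) (hMq i u hcon)
    have hterm0 : ∀ i : Fin N, i ≠ i₀ → (q i * HserR p R (a i)).coeff T = 0 := by
      intro i hne
      by_cases hgt : ρ < r i
      · rw [hlong i hgt, zero_mul, HahnSeries.coeff_zero]
      · push_neg at hgt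
        rw [HahnSeries.coeff_mul]
        apply Finset.sum_eq_zero
        rintro ⟨u, v⟩ hmem
        rw [Finset.mem_addAntidiagonal] at hmem
        obtain ⟨hu, hv, huv⟩ := hmem
        rw [hHzero i hgt u v (hsupb i u hu) huv (fun hcon => hne hcon.1), mul_zero]
    have htermi₀ : (q i₀ * HserR p R (a i₀)).coeff T = (q i₀).coeff e * 1 := by
      rw [HahnSeries.coeff_mul]
      by_cases hqe : (q i₀).coeff e = 0
      · rw [hqe, zero_mul]
        apply Finset.sum_eq_zero
        rintro ⟨u, v⟩ hmem
        rw [Finset.mem_addAntidiagonal] at hmem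
        obtain ⟨hu, hv, huv⟩ := hmem
        by_cases hue : u = e
        · subst hue
          rw [hqe, zero_mul]
        · rw [hHzero i₀ (le_refl ρ) u v (hsupb i₀ u hu) huv (fun hcon => hue hcon.2), mul_zero]
      · have h0 : ∀ b ∈ Finset.antidiagonal (q i₀).isPWO_support
            (HserR p R (a i₀)).isPWO_support T, b ≠ ((e, T - e) : ℤ × ℤ) →
            (q i₀).coeff b.1 * (HserR p R (a i₀)).coeff b.2 = 0 := by
          rintro ⟨u, v⟩ hmem' hne'
          rw [Finset.mem_antidiagonal] at hmem'
          obtain ⟨hu, hv, huv⟩ := hmem'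
          have hue : u ≠ e := by
            rintro rfl
            apply hne'
            have hveq : v = T - u := by omega
            rw [hveq]
          rw [hHzero i₀ (le_refl ρ) u v (hsupb i₀ u hu) huv (fun hcon => hue hcon.2), mul_zero]
        have hmem : ((e, T - e) : ℤ × ℤ) ∈ Finset.antidiagonal
            (q i₀).isPWO_support (HserR p R (a i₀)).isPWO_support T := by
          rw [Finset.mem_antidiagonal]
          refine ⟨Function.mem_support.mpr hqe, Function.mem_support.mpr ?_, by ring⟩
          rw [hHone]
          exact one_ne_zero
        rw [Finset.sum_eq_single_of_mem ((e, T - e) : ℤ × ℤ) hmem h0, hHone]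
    have hsum1 : ∑ i, (q i * HserR p R (a i)).coeff T = (q i₀ * HserR p R (a i₀)).coeff T :=
      Finset.sum_eq_single_of_mem i₀ (Finset.mem_univ i₀) (fun i _ hne => hterm0 i hne)
    rw [hsum1, htermi₀, hq₀T, zero_add, mul_one] at hcoeffT
    exact hcoeffT
  have hind : ∀ d : ℕ, ∀ i : Fin N, Finset.univ.sup r < r i + d → q i = 0 := by
    intro d
    induction d with
    | zero =>
      intro i hi
      exfalso
      have := Finset.le_sup (f := r) (Finset.mem_univ i)
      omega
    | succ d IH =>
      intro i hi
      by_cases hcase : Finset.univ.sup r < r i + d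
      · exact IH i hcase
      · apply key i
        intro i' hi'
        apply IH i'
        omega
  have hqz : ∀ i, q i = 0 := fun i => hind (Finset.univ.sup r + 1) i (by omega)
  refine ⟨?_, hqz⟩
  have h2 := heq
  rw [Finset.sum_eq_zero (fun i _ => by rw [hqz i, zero_mul])] at h2
  simpa using h2
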